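/- arXiv:1612.05057 — 2 statements merged into one kernel-verified Lean document; each statement's English description precedes it below -/
import Mathlib

section
/- Assume M₁ᵏ − L·Id ∈ S₊(H), M₁ᵏ ⪰ M₁^{k+1}, M₂ᵏ ∈ S₊(G), and M₂ᵏ ⪰ M₂^{k+1} for all k ≥ 0, and let (xᵏ, zᵏ, yᵏ)_{k≥0} be the sequence generated by the variable-metric ADMM algorithm. Define the ergodic averages x̄ᵏ := (1/k)Σ_{i=1}^{k} xⁱ, ȳᵏ := (1/k)Σ_{i=1}^{k} yⁱ, z̄ᵏ := (1/k)Σ_{i=1}^{k} zⁱ for k ≥ 1. Then for all k ≥ 1 and all (x, z, y) ∈ H × G × G: l(x̄ᵏ, z̄ᵏ, y) − l(x, z, ȳᵏ) ≤ γ(x, z, y)/k, where γ(x, z, y) := (c/2)‖Ax − z⁰‖² + (1/2)(‖x − x⁰‖²_{M₁⁰} + ‖z − z⁰‖²_{M₂⁰}) + (1/(2c))‖y − y⁰‖². -/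
open scoped InnerProductSpace
open Filter

noncomputable section

section OpDefs

variable {E F : Type*} [NormedAddCommGroup E] [InnerProductSpace ℝ E]
  [NormedAddCommGroup F] [InnerProductSpace ℝ F]

/-- `U ∈ S₊(E)`: continuous linear, self-adjoint and positive semidefinite. -/
def IsSplusOp (U : E →L[ℝ] E) : Prop :=
  (∀ x y : E, ⟪U x, y⟫_ℝ = ⟪x, U y⟫_ℝ) ∧ ∀ x : E, 0 ≤ ⟪x, U x⟫_ℝ

/-- The squared seminorm `‖x‖²_U := ⟪x, U x⟫`. -/
def opSq (U : E →L[ℝ] E) (x : E) : ℝ := ⟪x, U x⟫_ℝ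

/-- Loewner order `U ⪰ V`. -/
def opLE (U V : E →L[ℝ] E) : Prop := ∀ x : E, ⟪x, V x⟫_ℝ ≤ ⟪x, U x⟫_ℝ

/-- `U ∈ P_α(E)`, i.e. `U ∈ S₊(E)` and `U ⪰ α·Id`. -/
def IsPalphaOp (α : ℝ) (U : E →L[ℝ] E) : Prop :=
  IsSplusOp U ∧ ∀ x : E, α * ‖x‖ ^ 2 ≤ ⟪x, U x⟫_ℝ

/-- Properness of an extended-real-valued function. -/
def ERealProper (f : E → EReal) : Prop := (∀ x, f x ≠ ⊥) ∧ ∃ x, f x ≠ ⊤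

/-- Convexity of an extended-real-valued function. -/
def ERealConvex (f : E → EReal) : Prop :=
  ∀ x y : E, ∀ a b : ℝ, 0 ≤ a → 0 ≤ b → a + b = 1 →
    f (a • x + b • y) ≤ (a : EReal) * f x + (b : EReal) * f y

/-- Weak convergence of a sequence in a Hilbert space, tested against inner products. -/
def WeakConv (u : ℕ → E) (p : E) : Prop :=
  ∀ w : E, Tendsto (fun k => ⟪u k, w⟫_ℝ) atTop (nhds ⟪p, w⟫_ℝ)

/-- The Lagrangian `l(x,z,y) = f(x) + g(z) + ⟪y, Ax - z⟫`. -/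
def Lagr (f : E → EReal) (g : F → EReal) (A : E →L[ℝ] F) (p : E) (q v : F) : EReal :=
  f p + g q + ((⟪v, A p - q⟫_ℝ : ℝ) : EReal)

/-- The Lagrangian with an additional smooth summand `h`:
`l(x,z,y) = f(x) + h(x) + g(z) + ⟪y, Ax - z⟫`. -/
def LagrH (f : E → EReal) (h : E → ℝ) (g : F → EReal) (A : E →L[ℝ] F)
    (p : E) (q v : F) : EReal :=
  f p + ((h p : ℝ) : EReal) + g q + ((⟪v, A p - q⟫_ℝ : ℝ) : EReal)

/-- `(xs, zs, ys)` is a saddle point of `l`. -/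
def IsSaddle (l : E → F → F → EReal) (xs : E) (zs ys : F) : Prop :=
  ∀ (p : E) (q v : F), l xs zs v ≤ l xs zs ys ∧ l xs zs ys ≤ l p q ys

/-- `xk1` is a minimizer of `u ↦ f u + (c/2)‖Au - zk + c⁻¹ yk‖² + (1/2)‖u - xk‖²_M`. -/
def IsXUpdate (f : E → EReal) (A : E →L[ℝ] F) (c : ℝ) (M : E →L[ℝ] E)
    (xk : E) (zk yk : F) (xk1 : E) : Prop :=
  ∀ u : E,
    f xk1 + (((c/2) * ‖A xk1 - zk + c⁻¹ • yk‖ ^ 2 + (1/2) * opSq M (xk1 - xk) : ℝ) : EReal) ≤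
    f u + (((c/2) * ‖A u - zk + c⁻¹ • yk‖ ^ 2 + (1/2) * opSq M (u - xk) : ℝ) : EReal)

/-- `xk1` is a minimizer of the `x`-subproblem with linearized smooth part:
`u ↦ f u + ⟪u - xk, ∇h(xk)⟫ + (c/2)‖Au - zk + c⁻¹ yk‖² + (1/2)‖u - xk‖²_M`. -/
def IsXUpdateGrad (f : E → EReal) (h' : E → E) (A : E →L[ℝ] F) (c : ℝ) (M : E →L[ℝ] E)
    (xk : E) (zk yk : F) (xk1 : E) : Prop :=
  ∀ u : E,
    f xk1 + ((⟪xk1 - xk, h' xk⟫_ℝ + (c/2) * ‖A xk1 - zk + c⁻¹ • yk‖ ^ 2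
        + (1/2) * opSq M (xk1 - xk) : ℝ) : EReal) ≤
    f u + ((⟪u - xk, h' xk⟫_ℝ + (c/2) * ‖A u - zk + c⁻¹ • yk‖ ^ 2
        + (1/2) * opSq M (u - xk) : ℝ) : EReal)

/-- `zk1` is a minimizer of `w ↦ g w + (c/2)‖Ax - w + c⁻¹ yk‖² + (1/2)‖w - zk‖²_M`. -/
def IsZUpdate (g : F → EReal) (c : ℝ) (M : F →L[ℝ] F)
    (Ax zk yk zk1 : F) : Prop :=
  ∀ w : F,
    g zk1 + (((c/2) * ‖Ax - zk1 + c⁻¹ • yk‖ ^ 2 + (1/2) * opSq M (zk1 - zk) : ℝ) : EReal) ≤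
    g w + (((c/2) * ‖Ax - w + c⁻¹ • yk‖ ^ 2 + (1/2) * opSq M (w - zk) : ℝ) : EReal)

end OpDefs


section HelperLemmas

variable {E F : Type*} [NormedAddCommGroup E] [InnerProductSpace ℝ E]
  [NormedAddCommGroup F] [InnerProductSpace ℝ F]

lemma min_to_grad_aux {a b s r : ℝ} (hr : 0 ≤ r)
    (h : ∀ t : ℝ, 0 < t → t ≤ 1 → t * a ≤ t * b + t * s + t ^ 2 * r) : a ≤ b + s := by
  refine le_of_forall_pos_le_add fun ε hε => ?_
  have hrpos : 0 < r + 1 := by linarith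
  set t := min 1 (ε / (r + 1)) with ht
  have ht0 : 0 < t := lt_min one_pos (div_pos hε hrpos)
  have ht1 : t ≤ 1 := min_le_left _ _
  have htr : t * r ≤ ε := by
    have h1 : t ≤ ε / (r + 1) := min_le_right _ _
    have h2 := mul_le_mul_of_nonneg_right h1 hr
    have h3 : ε / (r + 1) * r ≤ ε := by
      rw [div_mul_eq_mul_div, div_le_iff₀ hrpos]; nlinarith
    linarith
  have hmain := h t ht0 ht1
  nlinarith [mul_le_mul_of_nonneg_left htr ht0.le]

lemma sq_ident_op (M : E →L[ℝ] E) (hsym : ∀ a b : E, ⟪M a, b⟫_ℝ = ⟪a, M b⟫_ℝ) (a b c : E) :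
    2 * ⟪M (b - c), a - b⟫_ℝ =
      ⟪a - c, M (a - c)⟫_ℝ - ⟪a - b, M (a - b)⟫_ℝ - ⟪b - c, M (b - c)⟫_ℝ := by
  have hd : a - c = (a - b) + (b - c) := by abel
  simp only [hd, map_add, inner_add_left, inner_add_right]
  have h1 : ⟪a - b, M (b - c)⟫_ℝ = ⟪M (b - c), a - b⟫_ℝ := real_inner_comm _ _
  have h2 : ⟪b - c, M (a - b)⟫_ℝ = ⟪M (b - c), a - b⟫_ℝ := by rw [← hsym]
  linarith

lemma sq_ident_norm (a b c : F) :
    2 * ⟪b - c, a - b⟫_ℝ = ‖a - c‖ ^ 2 - ‖a - b‖ ^ 2 - ‖b - c‖ ^ 2 := by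
  have hd : a - c = (a - b) + (b - c) := by abel
  rw [hd, norm_add_sq_real]
  have := real_inner_comm (a - b) (b - c)
  linarith

/-- From the minimization property of `xs`, derive the linearized (first-order) inequality. -/
lemma update_grad_ineq (f : E → EReal) (hconv : ERealConvex f)
    (B : E →L[ℝ] F) (b₀ : F) (g₀ xc : E) {c : ℝ} (hc : 0 < c)
    (M : E →L[ℝ] E) (hsym : ∀ a b : E, ⟪M a, b⟫_ℝ = ⟪a, M b⟫_ℝ) (hpos : ∀ a : E, 0 ≤ ⟪a, M a⟫_ℝ)
    {xs : E} {Fs : ℝ} (hFs : f xs = ((Fs : ℝ) : EReal))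
    (hmin : ∀ u : E,
      f xs + ((⟪xs - xc, g₀⟫_ℝ + c / 2 * ‖B xs - b₀‖ ^ 2
          + 1 / 2 * ⟪xs - xc, M (xs - xc)⟫_ℝ : ℝ) : EReal) ≤
      f u + ((⟪u - xc, g₀⟫_ℝ + c / 2 * ‖B u - b₀‖ ^ 2
          + 1 / 2 * ⟪u - xc, M (u - xc)⟫_ℝ : ℝ) : EReal))
    {p : E} {Fp : ℝ} (hFp : f p = ((Fp : ℝ) : EReal)) :
    Fs ≤ Fp + (⟪p - xs, g₀⟫_ℝ + c * ⟪B xs - b₀, B (p - xs)⟫_ℝ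
        + ⟪M (xs - xc), p - xs⟫_ℝ) := by
  set d := p - xs with hd
  set s : ℝ := ⟪d, g₀⟫_ℝ + c * ⟪B xs - b₀, B d⟫_ℝ + ⟪M (xs - xc), d⟫_ℝ with hs
  set r : ℝ := c / 2 * ‖B d‖ ^ 2 + 1 / 2 * ⟪d, M d⟫_ℝ with hr
  have hrpos : 0 ≤ r := by
    have h1 := hpos d
    have h2 : (0:ℝ) ≤ ‖B d‖ ^ 2 := sq_nonneg _
    positivity
  have key : ∀ t : ℝ, 0 < t → t ≤ 1 → t * Fs ≤ t * Fp + t * s + t ^ 2 * r := by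
    intro t ht0 ht1
    have hvec : xs + t • d = (1 - t) • xs + t • p := by
      rw [hd]; module
    have hconvb : f (xs + t • d) ≤ (((1 - t) * Fs + t * Fp : ℝ) : EReal) := by
      rw [hvec]
      calc f ((1 - t) • xs + t • p) ≤ ((1 - t : ℝ) : EReal) * f xs + ((t : ℝ) : EReal) * f p :=
            hconv xs p (1 - t) t (by linarith) ht0.le (by ring)
        _ = (((1 - t) * Fs + t * Fp : ℝ) : EReal) := by
            rw [hFs, hFp, ← EReal.coe_mul, ← EReal.coe_mul, ← EReal.coe_add]
    have hq : (⟪xs + t • d - xc, g₀⟫_ℝ + c / 2 * ‖B (xs + t • d) - b₀‖ ^ 2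
        + 1 / 2 * ⟪xs + t • d - xc, M (xs + t • d - xc)⟫_ℝ)
        = (⟪xs - xc, g₀⟫_ℝ + c / 2 * ‖B xs - b₀‖ ^ 2
          + 1 / 2 * ⟪xs - xc, M (xs - xc)⟫_ℝ) + t * s + t ^ 2 * r := by
      have e1 : xs + t • d - xc = (xs - xc) + t • d := by abel
      have e2 : B (xs + t • d) - b₀ = (B xs - b₀) + t • B d := by
        rw [map_add, map_smul]; abel
      rw [e1, e2, norm_add_sq_real]
      have e3 : ⟪(xs - xc) + t • d, M ((xs - xc) + t • d)⟫_ℝ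
          = ⟪xs - xc, M (xs - xc)⟫_ℝ + 2 * t * ⟪M (xs - xc), d⟫_ℝ + t ^ 2 * ⟪d, M d⟫_ℝ := by
        simp only [map_add, map_smul, inner_add_left, inner_add_right,
          real_inner_smul_left, real_inner_smul_right]
        have c1 : ⟪xs - xc, M d⟫_ℝ = ⟪M (xs - xc), d⟫_ℝ := (hsym _ _).symm
        have c2 : ⟪d, M (xs - xc)⟫_ℝ = ⟪M (xs - xc), d⟫_ℝ := real_inner_comm _ _
        rw [c1, c2]; ring
      rw [e3]
      simp only [inner_add_left, real_inner_smul_left, real_inner_smul_right, norm_smul,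
        Real.norm_eq_abs, mul_pow, sq_abs]
      rw [hs, hr]; ring
    have hchain := hmin (xs + t • d)
    rw [hq, hFs] at hchain
    have hchain2 : (((Fs : ℝ) + (⟪xs - xc, g₀⟫_ℝ + c / 2 * ‖B xs - b₀‖ ^ 2
        + 1 / 2 * ⟪xs - xc, M (xs - xc)⟫_ℝ) : ℝ) : EReal) ≤
        ((((1 - t) * Fs + t * Fp) + ((⟪xs - xc, g₀⟫_ℝ + c / 2 * ‖B xs - b₀‖ ^ 2
          + 1 / 2 * ⟪xs - xc, M (xs - xc)⟫_ℝ) + t * s + t ^ 2 * r) : ℝ) : EReal) := by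
      rw [EReal.coe_add, EReal.coe_add]
      exact le_trans hchain (add_le_add_left hconvb _)
    rw [EReal.coe_le_coe_iff] at hchain2
    clear_value s r
    linarith
  have := min_to_grad_aux hrpos key
  linarith

set_option maxHeartbeats 2000000 in
/-- The per-iteration inequality of variable-metric ADMM, as a purely real statement. -/
lemma per_iter {c L : ℝ} (hc : 0 < c) (A : E →L[ℝ] F)
    (M : E →L[ℝ] E) (N : F →L[ℝ] F)
    (hMsym : ∀ a b : E, ⟪M a, b⟫_ℝ = ⟪a, M b⟫_ℝ)
    (hML : ∀ a : E, L * ‖a‖ ^ 2 ≤ ⟪a, M a⟫_ℝ)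
    (hNsym : ∀ a b : F, ⟪N a, b⟫_ℝ = ⟪a, N b⟫_ℝ)
    (hNpos : ∀ a : F, 0 ≤ ⟪a, N a⟫_ℝ)
    (xk x1 p : E) (zk z1 yk y1 q v : F) (g₀ : E)
    (hy : y1 = yk + c • (A x1 - z1))
    (F1 Fp G1 Gq hx1v hxkv hpv : ℝ)
    (hX : F1 ≤ Fp + (⟪p - x1, g₀⟫_ℝ + c * ⟪A x1 - zk + c⁻¹ • yk, A (p - x1)⟫_ℝ
        + ⟪M (x1 - xk), p - x1⟫_ℝ))
    (hZ : G1 ≤ Gq + (-(c * ⟪A x1 - z1 + c⁻¹ • yk, q - z1⟫_ℝ) + ⟪N (z1 - zk), q - z1⟫_ℝ))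
    (hdesc : hx1v ≤ hxkv + ⟪g₀, x1 - xk⟫_ℝ + L / 2 * ‖x1 - xk‖ ^ 2)
    (hcv : hxkv + ⟪g₀, p - xk⟫_ℝ ≤ hpv) :
    F1 + hx1v + G1 + ⟪v, A x1 - z1⟫_ℝ - (Fp + hpv + Gq + ⟪y1, A p - q⟫_ℝ)
      ≤ (c / 2 * ‖A p - zk‖ ^ 2
          + 1 / 2 * (⟪p - xk, M (p - xk)⟫_ℝ + ⟪q - zk, N (q - zk)⟫_ℝ)
          + 1 / (2 * c) * ‖v - yk‖ ^ 2)
        - (c / 2 * ‖A p - z1‖ ^ 2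
          + 1 / 2 * (⟪p - x1, M (p - x1)⟫_ℝ + ⟪q - z1, N (q - z1)⟫_ℝ)
          + 1 / (2 * c) * ‖v - y1‖ ^ 2) := by
  have hcne : c ≠ 0 := hc.ne'
  have h1 : ⟪v, A x1 - z1⟫_ℝ - ⟪y1, A x1 - z1⟫_ℝ = ⟪v - y1, A x1 - z1⟫_ℝ :=
    (inner_sub_left _ _ _).symm
  have hyy : y1 - yk = c • (A x1 - z1) := by rw [hy]; abel
  have h2 : 1 / (2 * c) * ‖v - yk‖ ^ 2 - 1 / (2 * c) * ‖v - y1‖ ^ 2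
      = ⟪v - y1, A x1 - z1⟫_ℝ + 1 / (2 * c) * ‖y1 - yk‖ ^ 2 := by
    have hb : ‖v - yk‖ ^ 2 = ‖v - y1‖ ^ 2 + 2 * ⟪v - y1, y1 - yk⟫_ℝ + ‖y1 - yk‖ ^ 2 := by
      have hd : v - yk = (v - y1) + (y1 - yk) := by abel
      rw [hd, norm_add_sq_real]
    have hs : ⟪v - y1, y1 - yk⟫_ℝ = c * ⟪v - y1, A x1 - z1⟫_ℝ := by
      rw [hyy, real_inner_smul_right]
    rw [hb, hs]; field_simp; ring
  have h3 := sq_ident_op M hMsym p x1 xk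
  have h4 := sq_ident_op N hNsym q z1 zk
  have hv1 : c • (A x1 - zk + c⁻¹ • yk) = y1 + c • (z1 - zk) := by
    rw [hy]; match_scalars <;> field_simp <;> ring
  have h5 : c * ⟪A x1 - zk + c⁻¹ • yk, A (p - x1)⟫_ℝ
      = ⟪y1, A (p - x1)⟫_ℝ + c * ⟪z1 - zk, A (p - x1)⟫_ℝ := by
    rw [← real_inner_smul_left, hv1, inner_add_left, real_inner_smul_left]
  have hv2 : c • (A x1 - z1 + c⁻¹ • yk) = y1 := by
    rw [hy]; match_scalars <;> field_simp
  have h6 : c * ⟪A x1 - z1 + c⁻¹ • yk, q - z1⟫_ℝ = ⟪y1, q - z1⟫_ℝ := by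
    rw [← real_inner_smul_left, hv2]
  have h7 : c * ⟪z1 - zk, A (p - x1)⟫_ℝ
      = c * ⟪z1 - zk, A p - z1⟫_ℝ - c * ⟪z1 - zk, A x1 - z1⟫_ℝ := by
    have hsplit : A (p - x1) = (A p - z1) - (A x1 - z1) := by
      rw [map_sub]; abel
    rw [hsplit, inner_sub_right]; ring
  have h8 : c * ⟪z1 - zk, A p - z1⟫_ℝ
      = c / 2 * ‖A p - zk‖ ^ 2 - c / 2 * ‖A p - z1‖ ^ 2 - c / 2 * ‖z1 - zk‖ ^ 2 := by
    have := sq_ident_norm (A p) z1 zk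
    linear_combination (c / 2) * this
  have h9 : c * ⟪z1 - zk, A x1 - z1⟫_ℝ = ⟪z1 - zk, y1 - yk⟫_ℝ := by
    rw [hyy, real_inner_smul_right]
  have h10 : 0 ≤ 1 / (2 * c) * ‖y1 - yk‖ ^ 2 + ⟪z1 - zk, y1 - yk⟫_ℝ
      + c / 2 * ‖z1 - zk‖ ^ 2 := by
    have h0 : 0 ≤ c / 2 * ‖(A x1 - z1) + (z1 - zk)‖ ^ 2 := by positivity
    rw [norm_add_sq_real] at h0
    have hnc : ‖y1 - yk‖ ^ 2 = c ^ 2 * ‖A x1 - z1‖ ^ 2 := by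
      rw [hyy, norm_smul, Real.norm_eq_abs, mul_pow, sq_abs]
    have hic : ⟪z1 - zk, y1 - yk⟫_ℝ = c * ⟪A x1 - z1, z1 - zk⟫_ℝ := by
      rw [hyy, real_inner_smul_right, real_inner_comm]
    rw [hnc, hic]
    have hcc : 1 / (2 * c) * (c ^ 2 * ‖A x1 - z1‖ ^ 2) = c / 2 * ‖A x1 - z1‖ ^ 2 := by
      field_simp
    rw [hcc]; ring_nf at h0 ⊢; linarith
  have h11 := hML (x1 - xk)
  have h12 := hNpos (z1 - zk)
  have h13 : ⟪g₀, p - xk⟫_ℝ = ⟪g₀, p - x1⟫_ℝ + ⟪g₀, x1 - xk⟫_ℝ := by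
    rw [← inner_add_right]; congr 1; abel
  have h13' : ⟪p - x1, g₀⟫_ℝ = ⟪g₀, p - x1⟫_ℝ := real_inner_comm _ _
  have h14 : ⟪y1, A (p - x1)⟫_ℝ - ⟪y1, q - z1⟫_ℝ - ⟪y1, A p - q⟫_ℝ
      = -⟪y1, A x1 - z1⟫_ℝ := by
    simp only [map_sub, inner_sub_right]; ring
  linarith

end HelperLemmas

section GradHelpers

open Topology

variable {E : Type*} [NormedAddCommGroup E] [InnerProductSpace ℝ E] [CompleteSpace E]

lemma curve_hasDerivAt (h : E → ℝ) (g₀ : E) (x d : E) (t : ℝ)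
    (hg : HasGradientAt h g₀ (x + t • d)) :
    HasDerivAt (fun s : ℝ => h (x + s • d)) ⟪g₀, d⟫_ℝ t := by
  have hcurve : HasDerivAt (fun s : ℝ => x + s • d) d t := by
    simpa using ((hasDerivAt_id t).smul_const d).const_add x
  have hfd : HasFDerivAt h (InnerProductSpace.toDual ℝ E g₀) (x + t • d) := hg
  have := hfd.comp_hasDerivAt t hcurve
  simpa [InnerProductSpace.toDual_apply_apply, Function.comp_def] using this

lemma convex_grad_le {h : E → ℝ} (hconv : ConvexOn ℝ Set.univ h) {g₀ x : E}
    (hg : HasGradientAt h g₀ x) (u : E) : h x + ⟪g₀, u - x⟫_ℝ ≤ h u := by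
  set d := u - x with hd
  set φ : ℝ → ℝ := fun s => h (x + s • d) with hφ
  have hder : HasDerivAt φ ⟪g₀, d⟫_ℝ 0 := by
    apply curve_hasDerivAt
    simpa using hg
  have hslope : Tendsto (slope φ 0) (𝓝[>] 0) (𝓝 ⟪g₀, d⟫_ℝ) := by
    have := hasDerivAt_iff_tendsto_slope.1 hder
    exact this.mono_left (nhdsWithin_mono 0 fun s hs => ne_of_gt hs)
  have hbound : ∀ᶠ t in 𝓝[>] (0:ℝ), slope φ 0 t ≤ h u - h x := by
    filter_upwards [Ioc_mem_nhdsGT_of_mem (Set.mem_Ico.2 ⟨le_refl (0:ℝ), one_pos⟩)]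
      with t ht
    obtain ⟨ht0, ht1⟩ := ht
    have hc : φ t ≤ (1 - t) * h x + t * h u := by
      have := hconv.2 (Set.mem_univ x) (Set.mem_univ u) (by linarith : (0:ℝ) ≤ 1 - t)
        ht0.le (by ring)
      have hvec : (1 - t) • x + t • u = x + t • d := by rw [hd]; module
      rw [hvec] at this
      simpa [φ, smul_eq_mul] using this
    have hφ0 : φ 0 = h x := by simp [φ]
    have hsl : slope φ 0 t = (φ t - h x) / t := by
      rw [slope_def_field, hφ0]; ring_nf
    rw [hsl, div_le_iff₀ ht0]
    nlinarith [hc]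
  have := le_of_tendsto hslope hbound
  linarith [this]

lemma descent_lemma {h : E → ℝ} {h' : E → E} (hgrad : ∀ p : E, HasGradientAt h (h' p) p)
    {L : ℝ} (hL : 0 ≤ L) (hlip : LipschitzWith (Real.toNNReal L) h') (x d : E) :
    h (x + d) ≤ h x + ⟪h' x, d⟫_ℝ + L / 2 * ‖d‖ ^ 2 := by
  set φ : ℝ → ℝ := fun s => h (x + s • d) with hφ
  set ψ : ℝ → ℝ := fun s => ⟪h' (x + s • d), d⟫_ℝ with hψ
  have hder : ∀ t : ℝ, HasDerivAt φ (ψ t) t := fun t =>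
    curve_hasDerivAt h (h' (x + t • d)) x d t (hgrad _)
  have hcont : Continuous ψ := by
    apply Continuous.inner
    · exact hlip.continuous.comp (by continuity)
    · exact continuous_const
  have hFTC : ∫ t in (0:ℝ)..1, ψ t = φ 1 - φ 0 :=
    intervalIntegral.integral_eq_sub_of_hasDerivAt (fun t _ => hder t)
      (hcont.intervalIntegrable 0 1)
  have hptw : ∀ t ∈ Set.Icc (0:ℝ) 1, ψ t ≤ ψ 0 + (L * ‖d‖ ^ 2) * t := by
    intro t ht
    have hdiff : ψ t - ψ 0 = ⟪h' (x + t • d) - h' (x + (0:ℝ) • d), d⟫_ℝ := by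
      rw [inner_sub_left]
    have hle : ⟪h' (x + t • d) - h' (x + (0:ℝ) • d), d⟫_ℝ
        ≤ ‖h' (x + t • d) - h' (x + (0:ℝ) • d)‖ * ‖d‖ := real_inner_le_norm _ _
    have hlipb : ‖h' (x + t • d) - h' (x + (0:ℝ) • d)‖ ≤ L * (t * ‖d‖) := by
      have := hlip.dist_le_mul (x + t • d) (x + (0:ℝ) • d)
      rw [dist_eq_norm, dist_eq_norm] at this
      have harg : ‖x + t • d - (x + (0:ℝ) • d)‖ = t * ‖d‖ := by
        simp [norm_smul, abs_of_nonneg ht.1]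
      rw [harg] at this
      calc ‖h' (x + t • d) - h' (x + (0:ℝ) • d)‖ ≤ (Real.toNNReal L : ℝ) * (t * ‖d‖) := this
        _ = L * (t * ‖d‖) := by rw [Real.coe_toNNReal L hL]
    nlinarith [norm_nonneg d, hle, ht.1]
  have hint : ∫ t in (0:ℝ)..1, ψ t ≤ ∫ t in (0:ℝ)..1, (ψ 0 + (L * ‖d‖ ^ 2) * t) := by
    apply intervalIntegral.integral_mono_on zero_le_one
      (hcont.intervalIntegrable 0 1)
      ((continuous_const.add (continuous_const.mul continuous_id)).intervalIntegrable 0 1)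
    exact hptw
  have hii : IntervalIntegrable (fun t : ℝ => L * ‖d‖ ^ 2 * t) MeasureTheory.volume 0 1 :=
    (by continuity : Continuous fun t : ℝ => L * ‖d‖ ^ 2 * t).intervalIntegrable 0 1
  have hval : ∫ t in (0:ℝ)..1, (ψ 0 + (L * ‖d‖ ^ 2) * t) = ψ 0 + L * ‖d‖ ^ 2 / 2 := by
    rw [intervalIntegral.integral_add (intervalIntegrable_const) hii,
      intervalIntegral.integral_const_mul, integral_id]
    simp
    ring
  have hφ1 : φ 1 = h (x + d) := by simp [φ]
  have hφ0 : φ 0 = h x := by simp [φ]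
  have hψ0 : ψ 0 = ⟪h' x, d⟫_ℝ := by simp [ψ]
  rw [hFTC] at hint
  rw [hval, hφ1, hφ0, hψ0] at hint
  linarith

end GradHelpers

section JensenHelpers

variable {E : Type*} [NormedAddCommGroup E] [InnerProductSpace ℝ E]

lemma ereal_jensen (f : E → EReal) (hf : ERealConvex f) :
    ∀ k : ℕ, 1 ≤ k → ∀ (u : ℕ → E) (Fv : ℕ → ℝ),
      (∀ i, i < k → f (u i) ≤ ((Fv i : ℝ) : EReal)) →
      f ((k : ℝ)⁻¹ • ∑ i ∈ Finset.range k, u i) ≤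
        ((((k : ℝ)⁻¹ * ∑ i ∈ Finset.range k, Fv i : ℝ)) : EReal) := by
  intro k
  induction k with
  | zero => omega
  | succ n ih =>
    intro _ u Fv hb
    rcases Nat.eq_zero_or_pos n with hn0 | hn1
    · subst hn0
      simpa [Finset.sum_range_one] using hb 0 (by omega)
    · have hnR : (0:ℝ) < n := by exact_mod_cast hn1
      have hn1R : (0:ℝ) < (n:ℝ) + 1 := by linarith
      set a : ℝ := (n : ℝ) / ((n : ℝ) + 1) with ha
      set b : ℝ := 1 / ((n : ℝ) + 1) with hbdef
      have ha0 : 0 ≤ a := by positivity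
      have hb0 : 0 ≤ b := by positivity
      have hab : a + b = 1 := by rw [ha, hbdef]; field_simp
      have hsum : ((n + 1 : ℕ) : ℝ)⁻¹ • ∑ i ∈ Finset.range (n + 1), u i
          = a • ((n : ℝ)⁻¹ • ∑ i ∈ Finset.range n, u i) + b • u n := by
        rw [Finset.sum_range_succ]
        push_cast
        match_scalars <;> simp only [ha, hbdef] <;> field_simp
      have h1 : f (((n + 1 : ℕ) : ℝ)⁻¹ • ∑ i ∈ Finset.range (n + 1), u i)
          ≤ (a : EReal) * f ((n : ℝ)⁻¹ • ∑ i ∈ Finset.range n, u i)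
            + (b : EReal) * f (u n) := by
        rw [hsum]; exact hf _ _ a b ha0 hb0 hab
      have h2 := ih hn1 u Fv (fun i hi => hb i (by omega))
      have h3 := hb n (by omega)
      have h4 : (a : EReal) * f ((n : ℝ)⁻¹ • ∑ i ∈ Finset.range n, u i)
          ≤ (a : EReal) * (((n : ℝ)⁻¹ * ∑ i ∈ Finset.range n, Fv i : ℝ) : EReal) :=
        mul_le_mul_of_nonneg_left h2 (by exact_mod_cast ha0)
      have h5 : (b : EReal) * f (u n) ≤ (b : EReal) * ((Fv n : ℝ) : EReal) :=
        mul_le_mul_of_nonneg_left h3 (by exact_mod_cast hb0)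
      have h6 : (a : EReal) * (((n : ℝ)⁻¹ * ∑ i ∈ Finset.range n, Fv i : ℝ) : EReal)
          + (b : EReal) * ((Fv n : ℝ) : EReal)
          = ((((n + 1 : ℕ) : ℝ)⁻¹ * ∑ i ∈ Finset.range (n + 1), Fv i : ℝ) : EReal) := by
        rw [← EReal.coe_mul, ← EReal.coe_mul, ← EReal.coe_add]
        norm_cast
        rw [Finset.sum_range_succ, ha, hbdef]
        push_cast
        field_simp
      calc f (((n + 1 : ℕ) : ℝ)⁻¹ • ∑ i ∈ Finset.range (n + 1), u i)
          ≤ _ := h1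
        _ ≤ _ := add_le_add h4 h5
        _ = _ := h6

lemma ereal_ne_top_of_le {X Y : EReal} {a b : ℝ} (hY : Y ≠ ⊤)
    (hle : X + (a : EReal) ≤ Y + (b : EReal)) : X ≠ ⊤ := by
  intro hX
  rw [hX, EReal.top_add_of_ne_bot (EReal.coe_ne_bot a), top_le_iff] at hle
  exact (EReal.add_lt_top hY (EReal.coe_ne_top b)).ne hle

end JensenHelpers

theorem stmt9 {H G : Type*}
    [NormedAddCommGroup H] [InnerProductSpace ℝ H] [CompleteSpace H]
    [NormedAddCommGroup G] [InnerProductSpace ℝ G] [CompleteSpace G]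
    (f : H → EReal) (g : G → EReal)
    (hfp : ERealProper f) (hfc : ERealConvex f) (hfl : LowerSemicontinuous f)
    (hgp : ERealProper g) (hgc : ERealConvex g) (hgl : LowerSemicontinuous g)
    (h : H → ℝ) (h' : H → H) (L : ℝ) (hL : 0 < L)
    (hconv : ConvexOn ℝ Set.univ h)
    (hgrad : ∀ p : H, HasGradientAt h (h' p) p)
    (hlip : LipschitzWith (Real.toNNReal L) h')
    (A : H →L[ℝ] G) (c : ℝ) (hc : 0 < c)
    (M₁ : ℕ → (H →L[ℝ] H)) (M₂ : ℕ → (G →L[ℝ] G))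
    (hM₁ : ∀ k : ℕ, IsSplusOp (M₁ k)) (hM₂ : ∀ k : ℕ, IsSplusOp (M₂ k))
    (hM₁L : ∀ k : ℕ, IsSplusOp (M₁ k - L • ContinuousLinearMap.id ℝ H))
    (hM₁mono : ∀ k : ℕ, opLE (M₁ k) (M₁ (k+1)))
    (hM₂mono : ∀ k : ℕ, opLE (M₂ k) (M₂ (k+1)))
    (x : ℕ → H) (z y : ℕ → G)
    (hx : ∀ k : ℕ, IsXUpdateGrad f h' A c (M₁ k) (x k) (z k) (y k) (x (k+1)))
    (hz : ∀ k : ℕ, IsZUpdate g c (M₂ k) (A (x (k+1))) (z k) (y k) (z (k+1)))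
    (hy : ∀ k : ℕ, y (k+1) = y k + c • (A (x (k+1)) - z (k+1))) :
    ∀ k : ℕ, 1 ≤ k → ∀ (p : H) (q v : G),
      LagrH f h g A ((k : ℝ)⁻¹ • ∑ i ∈ Finset.range k, x (i+1))
          ((k : ℝ)⁻¹ • ∑ i ∈ Finset.range k, z (i+1)) v
        - LagrH f h g A p q ((k : ℝ)⁻¹ • ∑ i ∈ Finset.range k, y (i+1)) ≤
      ((((c/2) * ‖A p - z 0‖ ^ 2
          + (1/2) * (opSq (M₁ 0) (p - x 0) + opSq (M₂ 0) (q - z 0))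
          + (1/(2*c)) * ‖v - y 0‖ ^ 2) / (k : ℝ) : ℝ) : EReal) := by
  intro k hk p q v
  have hfb : ∀ u, f u ≠ ⊥ := hfp.1
  have hgb : ∀ u, g u ≠ ⊥ := hgp.1
  -- trivial case: the second Lagrangian is ⊤
  by_cases hfpt : f p = ⊤
  · have htop : LagrH f h g A p q ((k : ℝ)⁻¹ • ∑ i ∈ Finset.range k, y (i+1)) = ⊤ := by
      unfold LagrH
      rw [hfpt, EReal.top_add_of_ne_bot (EReal.coe_ne_bot _),
        EReal.top_add_of_ne_bot (hgb q), EReal.top_add_of_ne_bot (EReal.coe_ne_bot _)]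
    rw [htop, EReal.sub_top]
    exact bot_le
  by_cases hgqt : g q = ⊤
  · have htop : LagrH f h g A p q ((k : ℝ)⁻¹ • ∑ i ∈ Finset.range k, y (i+1)) = ⊤ := by
      unfold LagrH
      rw [hgqt]
      have h1 : f p + ((h p : ℝ) : EReal) ≠ ⊥ := by
        rw [Ne, EReal.add_eq_bot_iff]
        push_neg
        exact ⟨hfb p, EReal.coe_ne_bot _⟩
      rw [add_comm (f p + ((h p : ℝ) : EReal)) ⊤, EReal.top_add_of_ne_bot h1,
        EReal.top_add_of_ne_bot (EReal.coe_ne_bot _)]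
    rw [htop, EReal.sub_top]
    exact bot_le
  -- real values
  set Fp : ℝ := (f p).toReal with hFpdef
  have hFp : f p = ((Fp : ℝ) : EReal) := (EReal.coe_toReal hfpt (hfb p)).symm
  set Gq : ℝ := (g q).toReal with hGqdef
  have hGq : g q = ((Gq : ℝ) : EReal) := (EReal.coe_toReal hgqt (hgb q)).symm
  -- finiteness of the iterates' values
  obtain ⟨u₀, hu₀⟩ := hfp.2
  obtain ⟨w₀, hw₀⟩ := hgp.2
  have hfxt : ∀ i : ℕ, f (x (i+1)) ≠ ⊤ := fun i => ereal_ne_top_of_le hu₀ (hx i u₀)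
  have hgzt : ∀ i : ℕ, g (z (i+1)) ≠ ⊤ := fun i => ereal_ne_top_of_le hw₀ (hz i w₀)
  set Fv : ℕ → ℝ := fun i => (f (x (i+1))).toReal with hFvdef
  have hFv : ∀ i : ℕ, f (x (i+1)) = ((Fv i : ℝ) : EReal) := fun i =>
    (EReal.coe_toReal (hfxt i) (hfb _)).symm
  set Gv : ℕ → ℝ := fun i => (g (z (i+1))).toReal with hGvdef
  have hGv : ∀ i : ℕ, g (z (i+1)) = ((Gv i : ℝ) : EReal) := fun i =>
    (EReal.coe_toReal (hgzt i) (hgb _)).symm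
  -- first-order inequality from the x-update
  have hXineq : ∀ i : ℕ, Fv i ≤ Fp + (⟪p - x (i+1), h' (x i)⟫_ℝ
      + c * ⟪A (x (i+1)) - z i + c⁻¹ • y i, A (p - x (i+1))⟫_ℝ
      + ⟪M₁ i (x (i+1) - x i), p - x (i+1)⟫_ℝ) := by
    intro i
    have hmin : ∀ u : H,
        f (x (i+1)) + ((⟪x (i+1) - x i, h' (x i)⟫_ℝ
            + c / 2 * ‖A (x (i+1)) - (z i - c⁻¹ • y i)‖ ^ 2
            + 1 / 2 * ⟪x (i+1) - x i, M₁ i (x (i+1) - x i)⟫_ℝ : ℝ) : EReal) ≤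
        f u + ((⟪u - x i, h' (x i)⟫_ℝ
            + c / 2 * ‖A u - (z i - c⁻¹ • y i)‖ ^ 2
            + 1 / 2 * ⟪u - x i, M₁ i (u - x i)⟫_ℝ : ℝ) : EReal) := by
      intro u
      have := hx i u
      simp only [opSq] at this
      have e1 : A (x (i+1)) - (z i - c⁻¹ • y i) = A (x (i+1)) - z i + c⁻¹ • y i := by abel
      have e2 : A u - (z i - c⁻¹ • y i) = A u - z i + c⁻¹ • y i := by abel
      rw [e1, e2]
      convert this using 4 <;> ring
    have hcon := update_grad_ineq f hfc A (z i - c⁻¹ • y i) (h' (x i)) (x i) hc (M₁ i)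
      (hM₁ i).1 (hM₁ i).2 (hFv i) hmin hFp
    have e3 : A (x (i+1)) - (z i - c⁻¹ • y i) = A (x (i+1)) - z i + c⁻¹ • y i := by abel
    rw [e3] at hcon
    exact hcon
  -- first-order inequality from the z-update
  have hZineq : ∀ i : ℕ, Gv i ≤ Gq
      + (-(c * ⟪A (x (i+1)) - z (i+1) + c⁻¹ • y i, q - z (i+1)⟫_ℝ)
        + ⟪M₂ i (z (i+1) - z i), q - z (i+1)⟫_ℝ) := by
    intro i
    set B : G →L[ℝ] G := -(ContinuousLinearMap.id ℝ G) with hB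
    set b₀ : G := -(A (x (i+1))) - c⁻¹ • y i with hb₀
    have hBv : ∀ w : G, B w - b₀ = A (x (i+1)) - w + c⁻¹ • y i := by
      intro w
      rw [hB, hb₀]
      simp only [ContinuousLinearMap.neg_apply, ContinuousLinearMap.coe_id', id_eq]
      abel
    have hmin : ∀ w : G,
        g (z (i+1)) + ((⟪z (i+1) - z i, (0:G)⟫_ℝ
            + c / 2 * ‖B (z (i+1)) - b₀‖ ^ 2
            + 1 / 2 * ⟪z (i+1) - z i, M₂ i (z (i+1) - z i)⟫_ℝ : ℝ) : EReal) ≤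
        g w + ((⟪w - z i, (0:G)⟫_ℝ
            + c / 2 * ‖B w - b₀‖ ^ 2
            + 1 / 2 * ⟪w - z i, M₂ i (w - z i)⟫_ℝ : ℝ) : EReal) := by
      intro w
      have := hz i w
      simp only [opSq] at this
      rw [hBv, hBv]
      simp only [inner_zero_right, zero_add]
      convert this using 4 <;> ring
    have hcon := update_grad_ineq g hgc B b₀ (0:G) (z i) hc (M₂ i)
      (hM₂ i).1 (hM₂ i).2 (hGv i) hmin hGq
    rw [hBv] at hcon
    simp only [inner_zero_right, zero_add, hB, ContinuousLinearMap.neg_apply,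
      ContinuousLinearMap.coe_id', id_eq, inner_neg_right] at hcon
    linarith [hcon]
  -- inequalities for h
  have hdesc : ∀ i : ℕ, h (x (i+1)) ≤ h (x i) + ⟪h' (x i), x (i+1) - x i⟫_ℝ
      + L / 2 * ‖x (i+1) - x i‖ ^ 2 := by
    intro i
    have := descent_lemma hgrad hL.le hlip (x i) (x (i+1) - x i)
    rwa [add_sub_cancel] at this
  have hcv : ∀ i : ℕ, h (x i) + ⟪h' (x i), p - x i⟫_ℝ ≤ h p := fun i =>
    convex_grad_le hconv (hgrad (x i)) p
  -- positivity facts about the metrics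
  have hML : ∀ i : ℕ, ∀ a : H, L * ‖a‖ ^ 2 ≤ ⟪a, M₁ i a⟫_ℝ := by
    intro i a
    have := (hM₁L i).2 a
    simp only [ContinuousLinearMap.sub_apply, ContinuousLinearMap.smul_apply,
      ContinuousLinearMap.coe_id', id_eq, inner_sub_right, real_inner_smul_right,
      real_inner_self_eq_norm_sq] at this
    linarith
  -- the per-iteration descent of the Lyapunov function
  set Φ : ℕ → ℝ := fun j => c / 2 * ‖A p - z j‖ ^ 2
      + 1 / 2 * (⟪p - x j, M₁ j (p - x j)⟫_ℝ + ⟪q - z j, M₂ j (q - z j)⟫_ℝ)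
      + 1 / (2 * c) * ‖v - y j‖ ^ 2 with hΦdef
  set Lt : ℕ → ℝ := fun i => Fv i + h (x (i+1)) + Gv i + ⟪v, A (x (i+1)) - z (i+1)⟫_ℝ
      - (Fp + h p + Gq + ⟪y (i+1), A p - q⟫_ℝ) with hLtdef
  have hstep : ∀ i : ℕ, Lt i ≤ Φ i - Φ (i+1) := by
    intro i
    have hkey := per_iter hc A (M₁ i) (M₂ i) (hM₁ i).1 (hML i) (hM₂ i).1 (hM₂ i).2
      (x i) (x (i+1)) p (z i) (z (i+1)) (y i) (y (i+1)) q v (h' (x i)) (hy i)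
      (Fv i) Fp (Gv i) Gq (h (x (i+1))) (h (x i)) (h p)
      (hXineq i) (hZineq i) (hdesc i) (hcv i)
    have hm1 := hM₁mono i (p - x (i+1))
    have hm2 := hM₂mono i (q - z (i+1))
    simp only [hLtdef, hΦdef]
    linarith
  have hsum : ∑ i ∈ Finset.range k, Lt i ≤ Φ 0 := by
    have h1 : ∑ i ∈ Finset.range k, Lt i ≤ ∑ i ∈ Finset.range k, (Φ i - Φ (i+1)) :=
      Finset.sum_le_sum fun i _ => hstep i
    rw [Finset.sum_range_sub' Φ k] at h1
    have h2 : 0 ≤ Φ k := by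
      have p1 := (hM₁ k).2 (p - x k)
      have p2 := (hM₂ k).2 (q - z k)
      have p3 : (0:ℝ) ≤ c / 2 * ‖A p - z k‖ ^ 2 := by positivity
      have p4 : (0:ℝ) ≤ 1 / (2 * c) * ‖v - y k‖ ^ 2 := by positivity
      simp only [hΦdef]
      linarith
    linarith
  -- Jensen steps
  have hkpos : (0:ℝ) < (k:ℝ) := by exact_mod_cast hk
  have hfavg : f ((k : ℝ)⁻¹ • ∑ i ∈ Finset.range k, x (i+1)) ≤
      ((((k : ℝ)⁻¹ * ∑ i ∈ Finset.range k, Fv i : ℝ)) : EReal) :=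
    ereal_jensen f hfc k hk (fun i => x (i+1)) Fv (fun i _ => le_of_eq (hFv i))
  have hgavg : g ((k : ℝ)⁻¹ • ∑ i ∈ Finset.range k, z (i+1)) ≤
      ((((k : ℝ)⁻¹ * ∑ i ∈ Finset.range k, Gv i : ℝ)) : EReal) :=
    ereal_jensen g hgc k hk (fun i => z (i+1)) Gv (fun i _ => le_of_eq (hGv i))
  have hhconvE : ERealConvex (fun u : H => ((h u : ℝ) : EReal)) := by
    intro a b s t hs ht hst
    have := hconv.2 (Set.mem_univ a) (Set.mem_univ b) hs ht hst
    rw [← EReal.coe_mul, ← EReal.coe_mul, ← EReal.coe_add, EReal.coe_le_coe_iff]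
    simpa [smul_eq_mul] using this
  have hhavg : h ((k : ℝ)⁻¹ • ∑ i ∈ Finset.range k, x (i+1)) ≤
      (k : ℝ)⁻¹ * ∑ i ∈ Finset.range k, h (x (i+1)) := by
    have := ereal_jensen (fun u : H => ((h u : ℝ) : EReal)) hhconvE k hk
      (fun i => x (i+1)) (fun i => h (x (i+1))) (fun i _ => le_refl _)
    exact EReal.coe_le_coe_iff.mp (by simpa using this)
  -- inner product averages
  have hIV : ⟪v, A ((k : ℝ)⁻¹ • ∑ i ∈ Finset.range k, x (i+1))
      - (k : ℝ)⁻¹ • ∑ i ∈ Finset.range k, z (i+1)⟫_ℝ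
      = (k : ℝ)⁻¹ * ∑ i ∈ Finset.range k, ⟪v, A (x (i+1)) - z (i+1)⟫_ℝ := by
    have e : A ((k : ℝ)⁻¹ • ∑ i ∈ Finset.range k, x (i+1))
        - (k : ℝ)⁻¹ • ∑ i ∈ Finset.range k, z (i+1)
        = (k : ℝ)⁻¹ • ∑ i ∈ Finset.range k, (A (x (i+1)) - z (i+1)) := by
      rw [map_smul, map_sum, ← smul_sub, ← Finset.sum_sub_distrib]
    rw [e, real_inner_smul_right, inner_sum]
  have hIY : ⟪(k : ℝ)⁻¹ • ∑ i ∈ Finset.range k, y (i+1), A p - q⟫_ℝ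
      = (k : ℝ)⁻¹ * ∑ i ∈ Finset.range k, ⟪y (i+1), A p - q⟫_ℝ := by
    rw [real_inner_smul_left, sum_inner]
  -- final EReal chain
  set xb : H := (k : ℝ)⁻¹ • ∑ i ∈ Finset.range k, x (i+1) with hxb
  set zb : G := (k : ℝ)⁻¹ • ∑ i ∈ Finset.range k, z (i+1) with hzb
  set yb : G := (k : ℝ)⁻¹ • ∑ i ∈ Finset.range k, y (i+1) with hyb
  set FA : ℝ := (k : ℝ)⁻¹ * ∑ i ∈ Finset.range k, Fv i with hFA
  set HA : ℝ := (k : ℝ)⁻¹ * ∑ i ∈ Finset.range k, h (x (i+1)) with hHA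
  set GA : ℝ := (k : ℝ)⁻¹ * ∑ i ∈ Finset.range k, Gv i with hGA
  have hLpq : LagrH f h g A p q yb = ((Fp + h p + Gq + ⟪yb, A p - q⟫_ℝ : ℝ) : EReal) := by
    unfold LagrH
    rw [hFp, hGq, ← EReal.coe_add, ← EReal.coe_add, ← EReal.coe_add]
  have hLbar : LagrH f h g A xb zb v
      ≤ ((FA + HA + GA + ⟪v, A xb - zb⟫_ℝ : ℝ) : EReal) := by
    unfold LagrH
    rw [EReal.coe_add, EReal.coe_add, EReal.coe_add]
    refine add_le_add (add_le_add (add_le_add hfavg ?_) hgavg) le_rfl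
    exact_mod_cast hhavg
  have hreal : FA + HA + GA + ⟪v, A xb - zb⟫_ℝ - (Fp + h p + Gq + ⟪yb, A p - q⟫_ℝ)
      ≤ Φ 0 / (k : ℝ) := by
    have hsplit : ∑ i ∈ Finset.range k, Lt i
        = (∑ i ∈ Finset.range k, Fv i) + (∑ i ∈ Finset.range k, h (x (i+1)))
          + (∑ i ∈ Finset.range k, Gv i)
          + (∑ i ∈ Finset.range k, ⟪v, A (x (i+1)) - z (i+1)⟫_ℝ)
          - ((k : ℝ) * (Fp + h p + Gq) + ∑ i ∈ Finset.range k, ⟪y (i+1), A p - q⟫_ℝ) := by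
      simp only [hLtdef]
      rw [Finset.sum_sub_distrib, Finset.sum_add_distrib, Finset.sum_add_distrib,
        Finset.sum_add_distrib, Finset.sum_add_distrib, Finset.sum_const, Finset.card_range,
        nsmul_eq_mul]
    have hkne : (k:ℝ) ≠ 0 := hkpos.ne'
    have hdiv : FA + HA + GA + ⟪v, A xb - zb⟫_ℝ - (Fp + h p + Gq + ⟪yb, A p - q⟫_ℝ)
        = (k : ℝ)⁻¹ * ∑ i ∈ Finset.range k, Lt i := by
      rw [hsplit, hFA, hHA, hGA, hxb, hzb, hyb, hIV, hIY]
      field_simp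
    rw [hdiv, div_eq_mul_inv, mul_comm (Φ 0) ((k:ℝ)⁻¹)]
    exact mul_le_mul_of_nonneg_left hsum (by positivity)
  calc LagrH f h g A xb zb v - LagrH f h g A p q yb
      ≤ ((FA + HA + GA + ⟪v, A xb - zb⟫_ℝ : ℝ) : EReal)
        - ((Fp + h p + Gq + ⟪yb, A p - q⟫_ℝ : ℝ) : EReal) := by
        rw [hLpq]; exact EReal.sub_le_sub hLbar le_rfl
    _ = ((FA + HA + GA + ⟪v, A xb - zb⟫_ℝ
        - (Fp + h p + Gq + ⟪yb, A p - q⟫_ℝ) : ℝ) : EReal) := by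
        rw [EReal.coe_sub]
    _ ≤ ((Φ 0 / (k : ℝ) : ℝ) : EReal) := by
        rw [EReal.coe_le_coe_iff]; exact hreal
    _ = _ := by
        simp only [hΦdef, opSq]
end
end

section
/- Let S be a nonempty subset of a real Hilbert space H, (xᵏ)_{k≥0} a sequence in H, α > 0, and Wᵏ ∈ P_α(H) with Wᵏ ⪰ W^{k+1} for all k ≥ 0. Assume: (i) for all z ∈ S and all k ≥ 0, ‖x^{k+1} − z‖_{W^{k+1}} ≤ ‖xᵏ − z‖_{Wᵏ}; (ii) every weak sequential cluster point of (xᵏ)_{k≥0} belongs to S. Then (xᵏ)_{k≥0} converges weakly to an element of S. -/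
open scoped InnerProductSpace
open Filter

noncomputable section

section Aux

variable {H : Type*} [NormedAddCommGroup H] [InnerProductSpace ℝ H] [CompleteSpace H]

lemma weak_compact (u : ℕ → H) (R : ℝ) (hu : ∀ k, ‖u k‖ ≤ R) :
    ∃ p : H, ∃ φ : ℕ → ℕ, StrictMono φ ∧ WeakConv (u ∘ φ) p := by
  classical
  have hR0 : 0 ≤ R := le_trans (norm_nonneg _) (hu 0)
  set K : Submodule ℝ H := (Submodule.span ℝ (Set.range u)).topologicalClosure with hKdef
  haveI : CompleteSpace K := (Submodule.isClosed_topologicalClosure _).completeSpace_coe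
  have hsep : TopologicalSpace.IsSeparable ((Submodule.span ℝ (Set.range u) : Submodule ℝ H) : Set H) :=
    (Set.countable_range u).isSeparable.span
  obtain ⟨c, hc_count, hc_sub⟩ := hsep
  have hc_ne : c.Nonempty := by
    by_contra h
    rw [Set.not_nonempty_iff_eq_empty] at h
    subst h
    simpa using hc_sub (Submodule.zero_mem _)
  obtain ⟨y, rfl⟩ := hc_count.exists_eq_range hc_ne
  have hK_sub : (K : Set H) ⊆ closure (Set.range y) := by
    rw [hKdef, Submodule.topologicalClosure_coe]
    exact closure_minimal hc_sub isClosed_closure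
  -- diagonal extraction via sequential compactness of a countable product of intervals
  have hcpt : IsSeqCompact (Set.univ.pi (fun n : ℕ => Set.Icc (-(R * ‖y n‖)) (R * ‖y n‖))) :=
    (isCompact_univ_pi (fun n => isCompact_Icc)).isSeqCompact
  have hmem : ∀ k, (fun n => ⟪u k, y n⟫_ℝ) ∈
      (Set.univ.pi (fun n : ℕ => Set.Icc (-(R * ‖y n‖)) (R * ‖y n‖))) := by
    intro k
    rw [Set.mem_univ_pi]
    intro n
    have h1 : |⟪u k, y n⟫_ℝ| ≤ ‖u k‖ * ‖y n‖ := abs_real_inner_le_norm _ _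
    have h2 : ‖u k‖ * ‖y n‖ ≤ R * ‖y n‖ :=
      mul_le_mul_of_nonneg_right (hu k) (norm_nonneg _)
    have := abs_le.1 (h1.trans h2)
    exact ⟨this.1, this.2⟩
  obtain ⟨L, -, φ, hφ, hconv⟩ := hcpt hmem
  have hconv' : ∀ n, Tendsto (fun k => ⟪u (φ k), y n⟫_ℝ) atTop (nhds (L n)) := by
    rw [tendsto_pi_nhds] at hconv
    exact fun n => hconv n
  -- the scalar sequences are Cauchy against every vector
  have key : ∀ w : H, CauchySeq (fun k => ⟪u (φ k), w⟫_ℝ) := by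
    intro w
    set w' : H := (K.orthogonalProjectionOnto w : H) with hw'
    have heq : ∀ k, ⟪u (φ k), w⟫_ℝ = ⟪u (φ k), w'⟫_ℝ := by
      intro k
      have hmemK : u (φ k) ∈ K :=
        Submodule.le_topologicalClosure _ (Submodule.subset_span ⟨φ k, rfl⟩)
      have hperp : w - w' ∈ Kᗮ := Submodule.sub_starProjection_mem_orthogonal w
      have h0 : ⟪u (φ k), w - w'⟫_ℝ = 0 := (Submodule.mem_orthogonal _ _).1 hperp _ hmemK
      have := inner_sub_right (𝕜 := ℝ) (u (φ k)) w w'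
      rw [h0] at this
      linarith
    have hw'cl : w' ∈ closure (Set.range y) := hK_sub (K.orthogonalProjectionOnto w).2
    simp only [heq]
    rw [Metric.cauchySeq_iff]
    intro ε hε
    obtain ⟨z, hz, hdz⟩ := Metric.mem_closure_iff.1 hw'cl (ε / (3 * (R + 1)))
      (by positivity)
    obtain ⟨n, rfl⟩ := hz
    have hca : CauchySeq (fun k => ⟪u (φ k), y n⟫_ℝ) := (hconv' n).cauchySeq
    rw [Metric.cauchySeq_iff] at hca
    obtain ⟨N, hN⟩ := hca (ε / 3) (by positivity)
    refine ⟨N, fun m hm m' hm' => ?_⟩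
    have hd : ‖w' - y n‖ < ε / (3 * (R + 1)) := by
      rw [← dist_eq_norm]; exact hdz
    have bnd : ∀ j, |⟪u (φ j), w' - y n⟫_ℝ| ≤ R * (ε / (3 * (R + 1))) := by
      intro j
      calc |⟪u (φ j), w' - y n⟫_ℝ| ≤ ‖u (φ j)‖ * ‖w' - y n‖ := abs_real_inner_le_norm _ _
        _ ≤ R * (ε / (3 * (R + 1))) := by
            apply mul_le_mul (hu _) hd.le (norm_nonneg _) hR0
    have hRe : R * (ε / (3 * (R + 1))) < ε / 3 := by
      have h1 : R * (ε / (3 * (R + 1))) < (R + 1) * (ε / (3 * (R + 1))) :=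
        mul_lt_mul_of_pos_right (by linarith) (by positivity)
      have h2 : (R + 1) * (ε / (3 * (R + 1))) = ε / 3 := by
        field_simp
      linarith
    have hdist := hN m hm m' hm'
    rw [Real.dist_eq] at hdist ⊢
    have e1 : ⟪u (φ m), w'⟫_ℝ = ⟪u (φ m), w' - y n⟫_ℝ + ⟪u (φ m), y n⟫_ℝ := by
      rw [inner_sub_right]; ring
    have e2 : ⟪u (φ m'), w'⟫_ℝ = ⟪u (φ m'), w' - y n⟫_ℝ + ⟪u (φ m'), y n⟫_ℝ := by
      rw [inner_sub_right]; ring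
    rw [e1, e2]
    have b1 := bnd m
    have b2 := bnd m'
    rw [abs_le] at b1 b2
    rw [abs_lt] at hdist ⊢
    constructor <;> [linarith [hdist.1]; linarith [hdist.2]]
  choose limfun hlim using fun w => cauchySeq_tendsto_of_complete (key w)
  have hadd : ∀ w₁ w₂ : H, limfun (w₁ + w₂) = limfun w₁ + limfun w₂ := by
    intro w₁ w₂
    refine tendsto_nhds_unique (hlim _) ?_
    have := (hlim w₁).add (hlim w₂)
    simpa [inner_add_right] using this
  have hsmul : ∀ (a : ℝ) (w : H), limfun (a • w) = a * limfun w := by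
    intro a w
    refine tendsto_nhds_unique (hlim _) ?_
    have := (hlim w).const_mul a
    simpa [real_inner_smul_right] using this
  have hbound : ∀ w, |limfun w| ≤ R * ‖w‖ := by
    intro w
    refine le_of_tendsto (hlim w).abs (Filter.Eventually.of_forall fun k => ?_)
    exact (abs_real_inner_le_norm _ _).trans
      (mul_le_mul_of_nonneg_right (hu _) (norm_nonneg _))
  let f₀ : H →ₗ[ℝ] ℝ :=
    { toFun := limfun
      map_add' := hadd
      map_smul' := by intro a w; simpa [smul_eq_mul] using hsmul a w }
  let f : H →L[ℝ] ℝ := LinearMap.mkContinuous f₀ R (fun w => by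
    simpa [Real.norm_eq_abs, f₀] using hbound w)
  refine ⟨(InnerProductSpace.toDual ℝ H).symm f, φ, hφ, fun w => ?_⟩
  have : ⟪(InnerProductSpace.toDual ℝ H).symm f, w⟫_ℝ = f w :=
    InnerProductSpace.toDual_symm_apply
  rw [this]
  exact hlim w

end Aux

theorem stmt11 {H : Type*}
    [NormedAddCommGroup H] [InnerProductSpace ℝ H] [CompleteSpace H]
    (S : Set H) (hS : S.Nonempty) (x : ℕ → H)
    (α : ℝ) (hα : 0 < α) (W : ℕ → (H →L[ℝ] H))
    (hW : ∀ k : ℕ, IsPalphaOp α (W k))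
    (hWmono : ∀ k : ℕ, opLE (W k) (W (k+1)))
    (hFejer : ∀ p ∈ S, ∀ k : ℕ,
      Real.sqrt (opSq (W (k+1)) (x (k+1) - p)) ≤ Real.sqrt (opSq (W k) (x k - p)))
    (hcluster : ∀ p : H, (∃ φ : ℕ → ℕ, StrictMono φ ∧ WeakConv (x ∘ φ) p) → p ∈ S) :
    ∃ p ∈ S, WeakConv x p := by
  classical
  obtain ⟨z₀, hz₀⟩ := hS
  have hsa : ∀ (k : ℕ) (a b : H), ⟪W k a, b⟫_ℝ = ⟪a, W k b⟫_ℝ := fun k => (hW k).1.1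
  have hpos : ∀ (k : ℕ) (v : H), 0 ≤ ⟪v, W k v⟫_ℝ := fun k => (hW k).1.2
  -- Fejér monotonicity for the squares
  have hFe : ∀ p ∈ S, ∀ k, opSq (W (k+1)) (x (k+1) - p) ≤ opSq (W k) (x k - p) := by
    intro p hp k
    have h := hFejer p hp k
    have h1 : (0:ℝ) ≤ opSq (W (k+1)) (x (k+1) - p) := hpos (k+1) _
    have h2 : (0:ℝ) ≤ opSq (W k) (x k - p) := hpos k _
    nlinarith [Real.sq_sqrt h1, Real.sq_sqrt h2, Real.sqrt_nonneg (opSq (W k) (x k - p)),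
      Real.sqrt_nonneg (opSq (W (k+1)) (x (k+1) - p))]
  have hanti : ∀ p ∈ S, Antitone (fun k => opSq (W k) (x k - p)) :=
    fun p hp => antitone_nat_of_succ_le (fun k => hFe p hp k)
  have hDlim : ∀ p ∈ S, ∃ D, Tendsto (fun k => opSq (W k) (x k - p)) atTop (nhds D) := by
    intro p hp
    refine ⟨_, tendsto_atTop_ciInf (hanti p hp) ⟨0, ?_⟩⟩
    rintro r ⟨k, rfl⟩
    exact hpos k _
  -- boundedness of the sequence
  set C := opSq (W 0) (x 0 - z₀) with hC
  set R : ℝ := ‖z₀‖ + Real.sqrt (C / α) with hR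
  have hxb : ∀ k, ‖x k‖ ≤ R := by
    intro k
    have hb0 : opSq (W k) (x k - z₀) ≤ C := hanti z₀ hz₀ (Nat.zero_le k)
    have hαb := (hW k).2 (x k - z₀)
    have hn2 : ‖x k - z₀‖ ^ 2 ≤ C / α := by
      rw [le_div_iff₀ hα]
      calc ‖x k - z₀‖ ^ 2 * α = α * ‖x k - z₀‖ ^ 2 := by ring
        _ ≤ ⟪x k - z₀, W k (x k - z₀)⟫_ℝ := hαb
        _ ≤ C := hb0
    have h1 : ‖x k - z₀‖ ≤ Real.sqrt (C / α) := by
      rw [← Real.sqrt_sq (norm_nonneg (x k - z₀))]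
      exact Real.sqrt_le_sqrt hn2
    have h2 := norm_add_le (x k - z₀) z₀
    rw [sub_add_cancel] at h2
    rw [hR]; linarith
  -- quadratic form convergence and strong operator convergence
  have hqf_anti : ∀ v : H, Antitone (fun k => ⟪v, W k v⟫_ℝ) :=
    fun v => antitone_nat_of_succ_le (fun k => hWmono k v)
  have hqf_lim : ∀ v : H, ∃ e, Tendsto (fun k => ⟪v, W k v⟫_ℝ) atTop (nhds e) := by
    intro v
    refine ⟨_, tendsto_atTop_ciInf (hqf_anti v) ⟨0, ?_⟩⟩
    rintro r ⟨k, rfl⟩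
    exact hpos k v
  set C0 := ‖W 0‖ with hC0
  have hkey : ∀ (k m : ℕ), k ≤ m → ∀ v : H,
      ‖W k v - W m v‖ ^ 2 ≤ C0 * (⟪v, W k v⟫_ℝ - ⟪v, W m v⟫_ℝ) := by
    intro k m hkm v
    set T : H → H := fun a => W k a - W m a with hT
    have hTsa : ∀ a b : H, ⟪T a, b⟫_ℝ = ⟪a, T b⟫_ℝ := by
      intro a b
      simp only [hT, inner_sub_left, inner_sub_right, hsa]
    have hTpos : ∀ a : H, 0 ≤ ⟪a, T a⟫_ℝ := by
      intro a
      have := hqf_anti a hkm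
      simp only [hT, inner_sub_right]
      linarith
    have hTle : ∀ a : H, ⟪a, T a⟫_ℝ ≤ C0 * ‖a‖ ^ 2 := by
      intro a
      have h2 : (0:ℝ) ≤ ⟪a, W m a⟫_ℝ := hpos m a
      have h3 := hqf_anti a (Nat.zero_le k)
      have h4 : ⟪a, W 0 a⟫_ℝ ≤ ‖a‖ * ‖W 0 a‖ := real_inner_le_norm _ _
      have h5 : ‖W 0 a‖ ≤ C0 * ‖a‖ := (W 0).le_opNorm a
      have h6 : ⟪a, T a⟫_ℝ = ⟪a, W k a⟫_ℝ - ⟪a, W m a⟫_ℝ := by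
        simp only [hT, inner_sub_right]
      nlinarith [norm_nonneg a]
    have hCS : ∀ a b : H, ⟪a, T b⟫_ℝ ^ 2 ≤ ⟪a, T a⟫_ℝ * ⟪b, T b⟫_ℝ := by
      intro a b
      have hq : ∀ t : ℝ, 0 ≤ ⟪a, T a⟫_ℝ * (t * t) + (2 * ⟪a, T b⟫_ℝ) * t + ⟪b, T b⟫_ℝ := by
        intro t
        have h0 := hTpos (t • a + b)
        have hTlin : T (t • a + b) = t • T a + T b := by
          simp only [hT, map_add, map_smul]
          module
        have hexp : ⟪t • a + b, T (t • a + b)⟫_ℝ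
            = ⟪a, T a⟫_ℝ * (t * t) + (2 * ⟪a, T b⟫_ℝ) * t + ⟪b, T b⟫_ℝ := by
          rw [hTlin]
          rw [inner_add_left, inner_add_right, inner_add_right,
            real_inner_smul_left, real_inner_smul_left, real_inner_smul_right,
            real_inner_smul_right]
          have hba : ⟪b, T a⟫_ℝ = ⟪a, T b⟫_ℝ := by
            rw [← hTsa a b, real_inner_comm]
          rw [hba]
          ring
        linarith [hexp ▸ h0]
      have hd := discrim_le_zero hq
      rw [discrim] at hd
      nlinarith [hd]
    have hmain := hCS (T v) v
    have h6 : ⟪T v, T v⟫_ℝ = ‖T v‖ ^ 2 := real_inner_self_eq_norm_sq _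
    have h7 := hTle (T v)
    have h8 := hTpos v
    have hgoal : ‖T v‖ ^ 2 ≤ C0 * ⟪v, T v⟫_ℝ := by
      rcases eq_or_lt_of_le (sq_nonneg ‖T v‖) with h | h
      · rw [← h]
        have hC0nn : 0 ≤ C0 := norm_nonneg _
        positivity
      · nlinarith [hmain, h7, h8, h]
    have h9 : ⟪v, T v⟫_ℝ = ⟪v, W k v⟫_ℝ - ⟪v, W m v⟫_ℝ := by
      simp only [hT, inner_sub_right]
    rw [← h9]
    exact hgoal
  have hWCauchy : ∀ v : H, CauchySeq (fun k => W k v) := by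
    intro v
    obtain ⟨e, he⟩ := hqf_lim v
    rw [Metric.cauchySeq_iff]
    intro ε hε
    have hec : CauchySeq (fun k => ⟪v, W k v⟫_ℝ) := he.cauchySeq
    rw [Metric.cauchySeq_iff] at hec
    obtain ⟨N, hN⟩ := hec (ε ^ 2 / (C0 + 1)) (by positivity)
    refine ⟨N, fun m hm m' hm' => ?_⟩
    have hC0nn : (0:ℝ) ≤ C0 := norm_nonneg _
    -- wlog m' ≤ m is not symmetric; handle both orders
    have main : ∀ a b : ℕ, a ≤ b → a ≥ N → b ≥ N → dist (W a v) (W b v) < ε := by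
      intro a b hab ha hb
      have h1 := hkey a b hab v
      have h2 := hN a ha b hb
      rw [Real.dist_eq] at h2
      have h3 : ⟪v, W a v⟫_ℝ - ⟪v, W b v⟫_ℝ ≤ |⟪v, W a v⟫_ℝ - ⟪v, W b v⟫_ℝ| := le_abs_self _
      have h4 : ‖W a v - W b v‖ ^ 2 < ε ^ 2 := by
        calc ‖W a v - W b v‖ ^ 2 ≤ C0 * (⟪v, W a v⟫_ℝ - ⟪v, W b v⟫_ℝ) := h1
          _ ≤ C0 * |⟪v, W a v⟫_ℝ - ⟪v, W b v⟫_ℝ| := by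
              exact mul_le_mul_of_nonneg_left h3 hC0nn
          _ ≤ (C0 + 1) * |⟪v, W a v⟫_ℝ - ⟪v, W b v⟫_ℝ| := by
              apply mul_le_mul_of_nonneg_right (by linarith) (abs_nonneg _)
          _ < (C0 + 1) * (ε ^ 2 / (C0 + 1)) := by
              apply mul_lt_mul_of_pos_left h2 (by linarith)
          _ = ε ^ 2 := by field_simp
      rw [dist_eq_norm]
      exact lt_of_pow_lt_pow_left₀ 2 hε.le h4
    rcases le_total m m' with h | h
    · exact main m m' h hm hm'
    · rw [dist_comm]
      exact main m' m h hm' hm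
  choose Wlim hWlim using fun v => cauchySeq_tendsto_of_complete (hWCauchy v)
  have hWlim_qf : ∀ v : H, Tendsto (fun k => ⟪v, W k v⟫_ℝ) atTop (nhds ⟪v, Wlim v⟫_ℝ) :=
    fun v => Filter.Tendsto.inner (tendsto_const_nhds) (hWlim v)
  have hWlim_alpha : ∀ v : H, α * ‖v‖ ^ 2 ≤ ⟪v, Wlim v⟫_ℝ :=
    fun v => ge_of_tendsto (hWlim_qf v) (Filter.Eventually.of_forall fun k => (hW k).2 v)
  -- uniqueness of weak subsequential limits
  have huniq : ∀ p q : H, p ∈ S → q ∈ S →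
      (∃ φ : ℕ → ℕ, StrictMono φ ∧ WeakConv (x ∘ φ) p) →
      (∃ ψ : ℕ → ℕ, StrictMono ψ ∧ WeakConv (x ∘ ψ) q) → p = q := by
    rintro p q hp hq ⟨φ, hφ, hφw⟩ ⟨ψ, hψ, hψw⟩
    set v := q - p with hv
    obtain ⟨Dp, hDp⟩ := hDlim p hp
    obtain ⟨Dq, hDq⟩ := hDlim q hq
    have halg : ∀ k, ⟪x k, W k v⟫_ℝ =
        (opSq (W k) (x k - p) - opSq (W k) (x k - q)
          - ⟪p, W k p⟫_ℝ + ⟪q, W k q⟫_ℝ) / 2 := by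
      intro k
      have e1 : ∀ (a b : H), opSq (W k) (a - b)
          = ⟪a, W k a⟫_ℝ - 2 * ⟪a, W k b⟫_ℝ + ⟪b, W k b⟫_ℝ := by
        intro a b
        have hc : ⟪b, W k a⟫_ℝ = ⟪a, W k b⟫_ℝ := by
          rw [← hsa k a b, real_inner_comm]
        simp only [opSq, map_sub, inner_sub_left, inner_sub_right]
        rw [hc]; ring
      rw [e1, e1]
      have e2 : ⟪x k, W k v⟫_ℝ = ⟪x k, W k q⟫_ℝ - ⟪x k, W k p⟫_ℝ := by
        rw [hv, map_sub, inner_sub_right]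
      rw [e2]; ring
    set ℓ : ℝ := (Dp - Dq - ⟪p, Wlim p⟫_ℝ + ⟪q, Wlim q⟫_ℝ) / 2 with hℓ
    have ht : Tendsto (fun k => ⟪x k, W k v⟫_ℝ) atTop (nhds ℓ) := by
      simp only [halg]
      exact (((hDp.sub hDq).sub (hWlim_qf p)).add (hWlim_qf q)).div_const 2
    have hdiff : Tendsto (fun k => ⟪x k, W k v⟫_ℝ - ⟪x k, Wlim v⟫_ℝ) atTop (nhds 0) := by
      rw [tendsto_zero_iff_norm_tendsto_zero]
      apply squeeze_zero (g := fun k => R * ‖W k v - Wlim v‖) (fun k => norm_nonneg _)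
      · intro k
        have : ⟪x k, W k v⟫_ℝ - ⟪x k, Wlim v⟫_ℝ = ⟪x k, W k v - Wlim v⟫_ℝ := by
          rw [inner_sub_right]
        rw [Real.norm_eq_abs, this]
        exact (abs_real_inner_le_norm _ _).trans
          (mul_le_mul_of_nonneg_right (hxb k) (norm_nonneg _))
      · have h0 : Tendsto (fun k => ‖W k v - Wlim v‖) atTop (nhds 0) := by
          rw [← tendsto_iff_norm_sub_tendsto_zero]
          exact hWlim v
        have := h0.const_mul R
        simpa using this
    have hfix : Tendsto (fun k => ⟪x k, Wlim v⟫_ℝ) atTop (nhds ℓ) := by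
      have := ht.sub hdiff
      simpa using this
    have h1 : Tendsto (fun k => ⟪x (φ k), Wlim v⟫_ℝ) atTop (nhds ⟪p, Wlim v⟫_ℝ) := hφw (Wlim v)
    have h2 : Tendsto (fun k => ⟪x (φ k), Wlim v⟫_ℝ) atTop (nhds ℓ) :=
      hfix.comp hφ.tendsto_atTop
    have h3 : Tendsto (fun k => ⟪x (ψ k), Wlim v⟫_ℝ) atTop (nhds ⟪q, Wlim v⟫_ℝ) := hψw (Wlim v)
    have h4 : Tendsto (fun k => ⟪x (ψ k), Wlim v⟫_ℝ) atTop (nhds ℓ) :=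
      hfix.comp hψ.tendsto_atTop
    have e1 : ⟪p, Wlim v⟫_ℝ = ℓ := tendsto_nhds_unique h1 h2
    have e2 : ⟪q, Wlim v⟫_ℝ = ℓ := tendsto_nhds_unique h3 h4
    have hv0 : ⟪v, Wlim v⟫_ℝ = 0 := by
      rw [hv, inner_sub_left, e1, e2]; ring
    have halpha := hWlim_alpha v
    have hvnorm : ‖v‖ ^ 2 ≤ 0 := by nlinarith
    have : v = 0 := by
      have := sq_nonneg ‖v‖
      have hn : ‖v‖ = 0 := by nlinarith
      exact norm_eq_zero.1 hn
    rw [hv, sub_eq_zero] at this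
    exact this.symm
  -- assemble
  obtain ⟨p, φ, hφ, hφw⟩ := weak_compact x R hxb
  have hpS : p ∈ S := hcluster p ⟨φ, hφ, hφw⟩
  refine ⟨p, hpS, fun w => ?_⟩
  by_contra hcon
  rw [Metric.tendsto_atTop] at hcon
  push_neg at hcon
  obtain ⟨ε, hε, hfreq⟩ := hcon
  obtain ⟨ψ, hψ, hψprop⟩ := extraction_of_frequently_atTop (frequently_atTop.2 (by
    intro N
    obtain ⟨n, hn, hn2⟩ := hfreq N
    exact ⟨n, hn, hn2⟩))
  obtain ⟨q, σ, hσ, hσw⟩ := weak_compact (x ∘ ψ) R (fun k => hxb _)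
  have hσw' : WeakConv (x ∘ (ψ ∘ σ)) q := hσw
  have hqS : q ∈ S := hcluster q ⟨ψ ∘ σ, hψ.comp hσ, hσw'⟩
  have hpq : p = q := huniq p q hpS hqS ⟨φ, hφ, hφw⟩ ⟨ψ ∘ σ, hψ.comp hσ, hσw'⟩
  have hdist : Tendsto (fun k => dist ⟪x (ψ (σ k)), w⟫_ℝ ⟪p, w⟫_ℝ) atTop
      (nhds (dist ⟪q, w⟫_ℝ ⟪p, w⟫_ℝ)) :=
    (hσw' w).dist tendsto_const_nhds
  have hd0 : dist ⟪q, w⟫_ℝ ⟪p, w⟫_ℝ = 0 := by rw [← hpq, dist_self]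
  rw [hd0] at hdist
  have hge : ε ≤ 0 := ge_of_tendsto hdist (Filter.Eventually.of_forall fun k => hψprop (σ k))
  linarith
end
end
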